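/- Let ι be a finite index set and m, n : ι → ℝ vectors with 0 ≤ m j ≤ n j for all j (m are the frequencies in the current window W, n the frequencies in the enclosing bucket A₁). Let ε ∈ [0,1) and ζ > 0 satisfy ζ² > ε, and assume L2(m)² > (1−ε) · L2(n)². If an index i satisfies n i > ζ · L2(n), then m i > sqrt(ζ² − ε) · L2(m). (An element that is ζ-heavy in the bucket is sqrt(ζ²−ε)-heavy in the window.) -/

import Mathlib

theorem bucket_heavy_implies_window_heavy {ι : Type*} [Fintype ι]
    (m n : ι → ℝ) (hm : ∀ j, 0 ≤ m j) (hmn : ∀ j, m j ≤ n j)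
    (ε ζ : ℝ) (hε0 : 0 ≤ ε) (hε1 : ε < 1) (hζ : 0 < ζ) (hζε : ζ ^ 2 > ε)
    (hL : Real.sqrt (∑ j, (m j) ^ 2) ^ 2 > (1 - ε) * Real.sqrt (∑ j, (n j) ^ 2) ^ 2)
    (i : ι) (hi : n i > ζ * Real.sqrt (∑ j, (n j) ^ 2)) :
    m i > Real.sqrt (ζ ^ 2 - ε) * Real.sqrt (∑ j, (m j) ^ 2) := by
  classical
  set M2 := ∑ j, (m j) ^ 2 with hM2
  set N2 := ∑ j, (n j) ^ 2 with hN2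
  have hM2nn : 0 ≤ M2 := Finset.sum_nonneg fun j _ => sq_nonneg _
  have hN2nn : 0 ≤ N2 := Finset.sum_nonneg fun j _ => sq_nonneg _
  rw [Real.sq_sqrt hM2nn, Real.sq_sqrt hN2nn] at hL
  -- M2 ≤ N2
  have hMN : M2 ≤ N2 :=
    Finset.sum_le_sum fun j _ => pow_le_pow_left₀ (hm j) (hmn j) 2
  -- n i ^ 2 > ζ^2 * N2
  have hni2 : n i ^ 2 > ζ ^ 2 * N2 := by
    have h0 : 0 ≤ ζ * Real.sqrt N2 := mul_nonneg hζ.le (Real.sqrt_nonneg _)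
    have := pow_lt_pow_left₀ hi h0 two_ne_zero
    calc ζ ^ 2 * N2 = (ζ * Real.sqrt N2) ^ 2 := by
          rw [mul_pow, Real.sq_sqrt hN2nn]
      _ < n i ^ 2 := this
  -- rest sums
  have hrest : ∑ j ∈ Finset.univ.erase i, (m j) ^ 2 ≤
      ∑ j ∈ Finset.univ.erase i, (n j) ^ 2 :=
    Finset.sum_le_sum fun j _ => pow_le_pow_left₀ (hm j) (hmn j) 2
  have hMsplit : M2 = m i ^ 2 + ∑ j ∈ Finset.univ.erase i, (m j) ^ 2 := by
    rw [hM2, ← Finset.add_sum_erase _ _ (Finset.mem_univ i)]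
  have hNsplit : N2 = n i ^ 2 + ∑ j ∈ Finset.univ.erase i, (n j) ^ 2 := by
    rw [hN2, ← Finset.add_sum_erase _ _ (Finset.mem_univ i)]
  have key : m i ^ 2 > (ζ ^ 2 - ε) * M2 := by
    have h1 : m i ^ 2 > n i ^ 2 - ε * N2 := by nlinarith
    have h2 : (ζ ^ 2 - ε) * M2 ≤ (ζ ^ 2 - ε) * N2 :=
      mul_le_mul_of_nonneg_left hMN (by linarith)
    nlinarith
  have hrhs : (Real.sqrt (ζ ^ 2 - ε) * Real.sqrt M2) ^ 2 = (ζ ^ 2 - ε) * M2 := by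
    rw [mul_pow, Real.sq_sqrt (by linarith), Real.sq_sqrt hM2nn]
  have : (Real.sqrt (ζ ^ 2 - ε) * Real.sqrt M2) ^ 2 < m i ^ 2 := by
    rw [hrhs]; exact key
  exact lt_of_pow_lt_pow_left₀ 2 (hm i) this
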